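/- (Proposition 1, Potential Function.) For a given incentive profile u, a feasible flow f is a Wardrop equilibrium if and only if f minimizes the potential Φ(·,u) over the feasible set F. -/
import Mathlib


open Set MeasureTheory intervalIntegral

section RoutingGame

variable {E V P : Type*} [Fintype E] [Fintype V] [Fintype P] [Nonempty P]
  [DecidableEq E] [DecidableEq V]

/-- Edge flow: total flow of paths containing edge `e`. -/
noncomputable def edgeFlow (pathE : P → Finset E) (f : P → ℝ) (e : E) : ℝ :=
  ∑ p ∈ Finset.univ.filter (fun p => e ∈ pathE p), f p

/-- Node flow: total flow of paths containing node `v`. -/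
noncomputable def nodeFlow (pathV : P → Finset V) (f : P → ℝ) (v : V) : ℝ :=
  ∑ p ∈ Finset.univ.filter (fun p => v ∈ pathV p), f p

/-- Feasible flows: nonnegative, summing to one. -/
def Feasible (f : P → ℝ) : Prop := (∀ p, 0 ≤ f p) ∧ ∑ p, f p = 1

/-- Path cost with additive path-specific node incentives. -/
noncomputable def pathCost (pathE : P → Finset E) (pathV : P → Finset V)
    (ce : E → ℝ → ℝ) (cv : V → ℝ → ℝ) (u : V → P → ℝ) (f : P → ℝ) (p : P) : ℝ :=
  (∑ e ∈ pathE p, ce e (edgeFlow pathE f e)) +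
  (∑ v ∈ pathV p, (cv v (nodeFlow pathV f v) + u v p))

/-- Wardrop equilibrium: every used path has minimal cost. -/
def IsWardrop (pathE : P → Finset E) (pathV : P → Finset V)
    (ce : E → ℝ → ℝ) (cv : V → ℝ → ℝ) (u : V → P → ℝ) (f : P → ℝ) : Prop :=
  ∀ p q : P, 0 < f p →
    pathCost pathE pathV ce cv u f p ≤ pathCost pathE pathV ce cv u f q

/-- The potential function `Φ(f,u)`. -/
noncomputable def potential (pathE : P → Finset E) (pathV : P → Finset V)
    (ce : E → ℝ → ℝ) (cv : V → ℝ → ℝ) (u : V → P → ℝ) (f : P → ℝ) : ℝ :=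
  (∑ e, ∫ s in (0:ℝ)..(edgeFlow pathE f e), ce e s) +
  (∑ v, ∫ s in (0:ℝ)..(nodeFlow pathV f v), cv v s) +
  (∑ p, f p * ∑ v ∈ pathV p, u v p)

/-- Social cost. -/
noncomputable def socialCost (pathE : P → Finset E) (pathV : P → Finset V)
    (ce : E → ℝ → ℝ) (cv : V → ℝ → ℝ) (u : V → P → ℝ) (f : P → ℝ) : ℝ :=
  ∑ p, f p * pathCost pathE pathV ce cv u f p

set_option linter.unusedSectionVars false

lemma rg_integral_ge (c : ℝ → ℝ) (hc : ContinuousOn c (Icc 0 1)) (hm : MonotoneOn c (Icc 0 1))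
    {x y : ℝ} (hx : x ∈ Icc (0:ℝ) 1) (hy : y ∈ Icc (0:ℝ) 1) :
    (y - x) * c x ≤ ∫ s in x..y, c s := by
  have hsub : Set.uIcc x y ⊆ Set.Icc 0 1 := by
    rw [← Set.uIcc_of_le (zero_le_one' ℝ)]
    exact Set.uIcc_subset_uIcc (by rwa [Set.uIcc_of_le (zero_le_one' ℝ)])
      (by rwa [Set.uIcc_of_le (zero_le_one' ℝ)])
  have hint : IntervalIntegrable c volume x y := (hc.mono hsub).intervalIntegrable
  rcases le_total x y with h | h
  · have := intervalIntegral.integral_mono_on h (_root_.intervalIntegrable_const (c := c x)) hint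
      (fun s hs => hm hx (hsub (by rw [Set.uIcc_of_le h]; exact hs)) hs.1)
    simpa [intervalIntegral.integral_const, smul_eq_mul] using this
  · have hint' : IntervalIntegrable c volume y x := hint.symm
    have h2 := intervalIntegral.integral_mono_on h hint' (_root_.intervalIntegrable_const (c := c x))
      (fun s hs => hm (hsub (by rw [Set.uIcc_of_ge h]; exact hs)) hx hs.2)
    rw [intervalIntegral.integral_symm]
    simp only [intervalIntegral.integral_const, smul_eq_mul] at h2
    linarith

lemma rg_flow_swap {ι : Type*} [Fintype ι] [DecidableEq ι] (path : P → Finset ι)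
    (w : P → ℝ) (A : ι → ℝ) :
    ∑ i, (∑ p ∈ Finset.univ.filter (fun p => i ∈ path p), w p) * A i
      = ∑ p, w p * ∑ i ∈ path p, A i := by
  simp_rw [Finset.sum_mul, Finset.sum_filter, Finset.mul_sum]
  rw [Finset.sum_comm]
  refine Finset.sum_congr rfl fun p _ => ?_
  rw [← Finset.sum_filter]
  refine Finset.sum_congr ?_ fun _ _ => rfl
  ext i; simp

lemma rg_flow_mem {ι : Type*} [Fintype ι] [DecidableEq ι] (path : P → Finset ι) (f : P → ℝ)
    (hf : Feasible f) (i : ι) :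
    (∑ p ∈ Finset.univ.filter (fun p => i ∈ path p), f p) ∈ Icc (0:ℝ) 1 := by
  constructor
  · exact Finset.sum_nonneg fun p _ => hf.1 p
  · rw [← hf.2]
    exact Finset.sum_le_sum_of_subset_of_nonneg (Finset.filter_subset _ _)
      (fun p _ _ => hf.1 p)

lemma rg_grad_ineq (pathE : P → Finset E) (pathV : P → Finset V)
    (ce : E → ℝ → ℝ) (cv : V → ℝ → ℝ) (u : V → P → ℝ)
    (hce_cont : ∀ e, ContinuousOn (ce e) (Set.Icc (0:ℝ) 1))
    (hce_mono : ∀ e, MonotoneOn (ce e) (Set.Icc (0:ℝ) 1))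
    (hcv_cont : ∀ v, ContinuousOn (cv v) (Set.Icc (0:ℝ) 1))
    (hcv_mono : ∀ v, MonotoneOn (cv v) (Set.Icc (0:ℝ) 1))
    (f g : P → ℝ) (hf : Feasible f) (hg : Feasible g) :
    ∑ p, (g p - f p) * pathCost pathE pathV ce cv u f p ≤
      potential pathE pathV ce cv u g - potential pathE pathV ce cv u f := by
  have hEf : ∀ e, edgeFlow pathE f e ∈ Icc (0:ℝ) 1 := fun e => rg_flow_mem pathE f hf e
  have hEg : ∀ e, edgeFlow pathE g e ∈ Icc (0:ℝ) 1 := fun e => rg_flow_mem pathE g hg e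
  have hVf : ∀ v, nodeFlow pathV f v ∈ Icc (0:ℝ) 1 := fun v => rg_flow_mem pathV f hf v
  have hVg : ∀ v, nodeFlow pathV g v ∈ Icc (0:ℝ) 1 := fun v => rg_flow_mem pathV g hg v
  -- step 1 : identity for the difference
  have hint : ∀ (c : ℝ → ℝ), ContinuousOn c (Icc 0 1) → ∀ x ∈ Icc (0:ℝ) 1,
      IntervalIntegrable c volume 0 x := by
    intro c hc x hx
    refine (hc.mono ?_).intervalIntegrable
    rw [Set.uIcc_of_le hx.1]
    exact Set.Icc_subset_Icc le_rfl hx.2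
  have key : potential pathE pathV ce cv u g - potential pathE pathV ce cv u f =
      (∑ e, ∫ s in (edgeFlow pathE f e)..(edgeFlow pathE g e), ce e s) +
      (∑ v, ∫ s in (nodeFlow pathV f v)..(nodeFlow pathV g v), cv v s) +
      (∑ p, (g p - f p) * ∑ v ∈ pathV p, u v p) := by
    unfold potential
    rw [show ∀ a b c a' b' c' : ℝ, (a+b+c) - (a'+b'+c') = (a-a') + (b-b') + (c-c') by intros; ring]
    rw [← Finset.sum_sub_distrib, ← Finset.sum_sub_distrib, ← Finset.sum_sub_distrib]
    congr 1
    · congr 1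
      · refine Finset.sum_congr rfl fun e _ => ?_
        rw [intervalIntegral.integral_interval_sub_left (hint _ (hce_cont e) _ (hEg e))
          (hint _ (hce_cont e) _ (hEf e))]
      · refine Finset.sum_congr rfl fun v _ => ?_
        rw [intervalIntegral.integral_interval_sub_left (hint _ (hcv_cont v) _ (hVg v))
          (hint _ (hcv_cont v) _ (hVf v))]
    · refine Finset.sum_congr rfl fun p _ => ?_; ring
  rw [key]
  -- step 2 : expand pathCost and bound
  have expand : ∑ p, (g p - f p) * pathCost pathE pathV ce cv u f p =
      (∑ p, (g p - f p) * ∑ e ∈ pathE p, ce e (edgeFlow pathE f e)) +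
      (∑ p, (g p - f p) * ∑ v ∈ pathV p, cv v (nodeFlow pathV f v)) +
      (∑ p, (g p - f p) * ∑ v ∈ pathV p, u v p) := by
    rw [← Finset.sum_add_distrib, ← Finset.sum_add_distrib]
    refine Finset.sum_congr rfl fun p _ => ?_
    unfold pathCost
    rw [Finset.sum_add_distrib]
    ring
  rw [expand]
  have hedge : (∑ p, (g p - f p) * ∑ e ∈ pathE p, ce e (edgeFlow pathE f e)) ≤
      ∑ e, ∫ s in (edgeFlow pathE f e)..(edgeFlow pathE g e), ce e s := by
    rw [← rg_flow_swap pathE (fun p => g p - f p) (fun e => ce e (edgeFlow pathE f e))]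
    refine Finset.sum_le_sum fun e _ => ?_
    have hw : (∑ p ∈ Finset.univ.filter (fun p => e ∈ pathE p), (g p - f p)) =
        edgeFlow pathE g e - edgeFlow pathE f e := by
      unfold edgeFlow; rw [Finset.sum_sub_distrib]
    rw [hw]
    exact rg_integral_ge (ce e) (hce_cont e) (hce_mono e) (hEf e) (hEg e)
  have hnode : (∑ p, (g p - f p) * ∑ v ∈ pathV p, cv v (nodeFlow pathV f v)) ≤
      ∑ v, ∫ s in (nodeFlow pathV f v)..(nodeFlow pathV g v), cv v s := by
    rw [← rg_flow_swap pathV (fun p => g p - f p) (fun v => cv v (nodeFlow pathV f v))]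
    refine Finset.sum_le_sum fun v _ => ?_
    have hw : (∑ p ∈ Finset.univ.filter (fun p => v ∈ pathV p), (g p - f p)) =
        nodeFlow pathV g v - nodeFlow pathV f v := by
      unfold nodeFlow; rw [Finset.sum_sub_distrib]
    rw [hw]
    exact rg_integral_ge (cv v) (hcv_cont v) (hcv_mono v) (hVf v) (hVg v)
  linarith


set_option maxHeartbeats 1000000 in
/-- **Proposition 1, Potential Function.** For a given incentive profile `u`,
a feasible flow `f` is a Wardrop equilibrium iff it minimizes `Φ(·,u)` over the feasible set. -/
theorem isWardrop_iff_minimizes_potential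
    (pathE : P → Finset E) (pathV : P → Finset V)
    (ce : E → ℝ → ℝ) (cv : V → ℝ → ℝ) (u : V → P → ℝ)
    (hce_nn : ∀ e, ∀ x ∈ Set.Icc (0:ℝ) 1, 0 ≤ ce e x)
    (hce_cont : ∀ e, ContinuousOn (ce e) (Set.Icc (0:ℝ) 1))
    (hce_mono : ∀ e, MonotoneOn (ce e) (Set.Icc (0:ℝ) 1))
    (hcv_nn : ∀ v, ∀ x ∈ Set.Icc (0:ℝ) 1, 0 ≤ cv v x)
    (hcv_cont : ∀ v, ContinuousOn (cv v) (Set.Icc (0:ℝ) 1))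
    (hcv_mono : ∀ v, MonotoneOn (cv v) (Set.Icc (0:ℝ) 1))
    (f : P → ℝ) (hf : Feasible f) :
    IsWardrop pathE pathV ce cv u f ↔
      ∀ g : P → ℝ, Feasible g →
        potential pathE pathV ce cv u f ≤ potential pathE pathV ce cv u g := by
  constructor
  · -- Wardrop → minimizer
    intro hW g hg
    obtain ⟨p0, hp0⟩ : ∃ p0, 0 < f p0 := by
      by_contra h
      push_neg at h
      have hz : ∀ p, f p = 0 := fun p => le_antisymm (h p) (hf.1 p)
      have h1 := hf.2
      rw [Finset.sum_congr rfl fun p _ => hz p] at h1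
      simp at h1
    set L := pathCost pathE pathV ce cv u f p0 with hLdef
    have hL : ∀ q, L ≤ pathCost pathE pathV ce cv u f q := fun q => hW p0 q hp0
    have hfc : ∑ p, f p * pathCost pathE pathV ce cv u f p = L := by
      have : ∀ p, f p * pathCost pathE pathV ce cv u f p = f p * L := by
        intro p
        rcases eq_or_lt_of_le (hf.1 p) with h0 | h0
        · rw [← h0]; ring
        · rw [le_antisymm (hW p p0 h0) (hL p)]
      rw [Finset.sum_congr rfl fun p _ => this p, ← Finset.sum_mul, hf.2, one_mul]
    have hgc : L ≤ ∑ p, g p * pathCost pathE pathV ce cv u f p := by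
      calc L = ∑ p, g p * L := by rw [← Finset.sum_mul, hg.2, one_mul]
        _ ≤ _ := Finset.sum_le_sum fun p _ => mul_le_mul_of_nonneg_left (hL p) (hg.1 p)
    have hgrad := rg_grad_ineq pathE pathV ce cv u hce_cont hce_mono hcv_cont hcv_mono
      f g hf hg
    have : (0:ℝ) ≤ ∑ p, (g p - f p) * pathCost pathE pathV ce cv u f p := by
      have : ∑ p, (g p - f p) * pathCost pathE pathV ce cv u f p =
          (∑ p, g p * pathCost pathE pathV ce cv u f p) -
          (∑ p, f p * pathCost pathE pathV ce cv u f p) := by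
        rw [← Finset.sum_sub_distrib]; exact Finset.sum_congr rfl fun p _ => by ring
      rw [this, hfc]; linarith
    linarith
  · -- minimizer → Wardrop
    intro hmin p q hp
    classical
    by_contra hlt
    push_neg at hlt
    have hpq : p ≠ q := by rintro rfl; exact absurd rfl (ne_of_gt hlt)
    set S : Set ℝ := Icc 0 (f p) with hS
    set G : ℝ → P → ℝ := fun t r =>
      f r + t * ((if r = q then 1 else 0) - (if r = p then 1 else 0)) with hG
    have hGfeas : ∀ t ∈ S, Feasible (G t) := by
      intro t ht
      constructor
      · intro r
        simp only [hG]
        by_cases hrq : r = q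
        · rw [if_pos hrq, if_neg (by rw [hrq]; exact Ne.symm hpq)]
          have := hf.1 r
          nlinarith [ht.1]
        · by_cases hrp : r = p
          · rw [if_neg hrq, if_pos hrp, hrp]
            linarith [ht.2]
          · rw [if_neg hrq, if_neg hrp]
            have := hf.1 r
            linarith
      · simp only [hG]
        rw [Finset.sum_add_distrib, hf.2]
        rw [← Finset.mul_sum]
        rw [Finset.sum_sub_distrib]
        simp [Finset.sum_ite_eq' Finset.univ]
    have h0S : (0:ℝ) ∈ S := by constructor <;> simp [le_of_lt hp]
    -- continuity of path costs along the segment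
    have hflowcontE : ∀ e : E, Continuous (fun t => edgeFlow pathE (G t) e) := by
      intro e
      unfold edgeFlow
      refine continuous_finset_sum _ fun p' _ => ?_
      simp only [hG]
      exact continuous_const.add (continuous_id.mul continuous_const)
    have hflowcontV : ∀ v : V, Continuous (fun t => nodeFlow pathV (G t) v) := by
      intro v
      unfold nodeFlow
      refine continuous_finset_sum _ fun p' _ => ?_
      simp only [hG]
      exact continuous_const.add (continuous_id.mul continuous_const)
    have hCcont : ∀ r : P, ContinuousOn
        (fun t => pathCost pathE pathV ce cv u (G t) r) S := by
      intro r
      unfold pathCost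
      apply ContinuousOn.add
      · apply continuousOn_finset_sum
        intro e _
        refine (hce_cont e).comp (hflowcontE e).continuousOn ?_
        intro t ht
        exact rg_flow_mem pathE (G t) (hGfeas t ht) e
      · apply continuousOn_finset_sum
        intro v _
        refine ContinuousOn.add ?_ continuousOn_const
        refine (hcv_cont v).comp (hflowcontV v).continuousOn ?_
        intro t ht
        exact rg_flow_mem pathV (G t) (hGfeas t ht) v
    set F : ℝ → ℝ := fun t => pathCost pathE pathV ce cv u (G t) q -
      pathCost pathE pathV ce cv u (G t) p with hF
    have hFcont : ContinuousWithinAt F S 0 :=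
      (((hCcont q).sub (hCcont p)) 0 h0S)
    have hG0 : G 0 = f := by funext r; simp [hG]
    have hF0 : F 0 < 0 := by
      simp only [hF, hG0]
      linarith
    have hten : Filter.Tendsto F (nhdsWithin 0 (Ioc 0 (f p))) (nhds (F 0)) :=
      hFcont.tendsto.mono_left (nhdsWithin_mono _ Ioc_subset_Icc_self)
    have hev : ∀ᶠ t in nhdsWithin 0 (Ioc 0 (f p)), F t < 0 :=
      hten.eventually_lt_const hF0
    have hmem : ∀ᶠ t in nhdsWithin 0 (Ioc 0 (f p)), t ∈ Ioc 0 (f p) :=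
      self_mem_nhdsWithin
    haveI : Filter.NeBot (nhdsWithin (0:ℝ) (Ioc 0 (f p))) := left_nhdsWithin_Ioc_neBot hp
    obtain ⟨t, htF, htmem⟩ := (hev.and hmem).exists
    -- minimality yields a contradiction
    have hgt : Feasible (G t) := hGfeas t ⟨le_of_lt htmem.1, htmem.2⟩
    have hgrad := rg_grad_ineq pathE pathV ce cv u hce_cont hce_mono hcv_cont hcv_mono
      (G t) f hgt hf
    have hmin' := hmin (G t) hgt
    have hsum : ∑ r, (f r - G t r) * pathCost pathE pathV ce cv u (G t) r = - (t * F t) := by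
      simp only [hG, hF]
      have : ∀ r, (f r - (f r + t * ((if r = q then 1 else 0) - (if r = p then 1 else 0)))) *
          pathCost pathE pathV ce cv u (G t) r =
          t * ((if r = p then 1 else 0) * pathCost pathE pathV ce cv u (G t) r) -
          t * ((if r = q then 1 else 0) * pathCost pathE pathV ce cv u (G t) r) := by
        intro r; ring
      rw [Finset.sum_congr rfl fun r _ => this r, Finset.sum_sub_distrib,
        ← Finset.mul_sum, ← Finset.mul_sum]
      simp [Finset.sum_ite_eq' Finset.univ, hG]
      ring
    rw [hsum] at hgrad
    have : 0 < - (t * F t) := by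
      have := htmem.1
      nlinarith
    linarith


end RoutingGame
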